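/- arXiv:2411.14260 — 2 statements merged into one kernel-verified Lean document; each statement's English description precedes it below -/
import Mathlib

section
/- Let d ≥ 1, p ∈ (1,∞), s ∈ (0,1) and r ≥ 1. There exists a constant c > 0, depending only on r, such that for every measurable v : ℝ^d → ℝ one has the inequality of (possibly infinite) integrals ∫_{ℝ^d}∫_{ℝ^d} ⟦v(x)−v(y)⟧^{p−1}(⟦v(x)⟧^r − ⟦v(y)⟧^r)|x−y|^{−(d+sp)} dx dy ≥ c ∫_{ℝ^d}∫_{ℝ^d} |v(x)−v(y)|^{p−1+r}|x−y|^{−(d+sp)} dx dy, both integrands being pointwise nonnegative. Equivalently, E(v, ⟦v⟧^r) ≥ c [v]_{s̃,p̃}^{p̃} where p̃ = p−1+r and s̃ = sp/p̃. -/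
open MeasureTheory ENNReal

/-- Signed power: `spow r x = |x|^(r-1) * x`. -/
noncomputable def spow (r x : ℝ) : ℝ := |x| ^ (r - 1) * x

lemma spow_of_nonneg {r x : ℝ} (hr : 0 < r) (hx : 0 ≤ x) : spow r x = x ^ r := by
  rcases hx.eq_or_lt with h | h
  · simp [spow, ← h, Real.zero_rpow hr.ne']
  · rw [spow, abs_of_pos h, ← Real.rpow_add_one h.ne', sub_add_cancel]

lemma spow_neg (r x : ℝ) : spow r (-x) = - spow r x := by
  simp [spow, abs_neg, mul_neg]

lemma rpow_superadd {x y r : ℝ} (hx : 0 ≤ x) (hy : 0 ≤ y) (hr : 1 ≤ r) :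
    x ^ r + y ^ r ≤ (x + y) ^ r := by
  have h := NNReal.add_rpow_le_rpow_add x.toNNReal y.toNNReal hr
  have h' : ((x.toNNReal ^ r + y.toNNReal ^ r : NNReal) : ℝ)
      ≤ (((x.toNNReal + y.toNNReal) ^ r : NNReal) : ℝ) := by exact_mod_cast h
  simpa [NNReal.coe_rpow, Real.coe_toNNReal x hx, Real.coe_toNNReal y hy,
    ← Real.toNNReal_add hx hy, max_eq_left (add_nonneg hx hy)] using h'

lemma key_nonneg {r : ℝ} (hr : 1 ≤ r) {a b : ℝ} (hb : 0 ≤ b) (hab : b ≤ a) :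
    (a - b) ^ r / 2 ^ r ≤ spow r a - spow r b := by
  have hr0 : 0 < r := lt_of_lt_of_le one_pos hr
  have ha : 0 ≤ a := hb.trans hab
  have h2 : (1:ℝ) ≤ 2 ^ r := Real.one_le_rpow one_le_two hr0.le
  rw [spow_of_nonneg hr0 ha, spow_of_nonneg hr0 hb]
  have hs : (a - b) ^ r + b ^ r ≤ a ^ r := by
    have := rpow_superadd (sub_nonneg.2 hab) hb hr
    simpa using this
  have hn : (0:ℝ) ≤ (a - b) ^ r := Real.rpow_nonneg (sub_nonneg.2 hab) r
  calc (a - b) ^ r / 2 ^ r ≤ (a - b) ^ r := div_le_self hn h2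
    _ ≤ a ^ r - b ^ r := by linarith

lemma key {r : ℝ} (hr : 1 ≤ r) {a b : ℝ} (hab : b ≤ a) :
    (a - b) ^ r / 2 ^ r ≤ spow r a - spow r b := by
  have hr0 : 0 < r := lt_of_lt_of_le one_pos hr
  rcases le_total 0 b with hb | hb
  · exact key_nonneg hr hb hab
  rcases le_total a 0 with ha | ha
  · have h := key_nonneg hr (neg_nonneg.2 ha) (neg_le_neg hab)
    have : -b - -a = a - b := by ring
    rw [this, spow_neg, spow_neg] at h
    linarith [h]
  · -- b ≤ 0 ≤ a
    have hab2 : 0 ≤ a - b := by linarith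
    have hnb : (0:ℝ) ≤ -b := by linarith
    have hman : (a - b) / 2 ≤ max a (-b) := by
      rcases le_total a (-b) with h | h
      · calc (a - b) / 2 ≤ -b := by linarith
          _ ≤ max a (-b) := le_max_right _ _
      · calc (a - b) / 2 ≤ a := by linarith
          _ ≤ max a (-b) := le_max_left _ _
    have hmax : ((a - b) / 2) ^ r ≤ (max a (-b)) ^ r :=
      Real.rpow_le_rpow (by linarith) hman hr0.le
    have hsum : (max a (-b)) ^ r ≤ a ^ r + (-b) ^ r := by
      rcases le_total a (-b) with h | h
      · rw [max_eq_right h]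
        have := Real.rpow_nonneg ha r
        linarith
      · rw [max_eq_left h]
        have := Real.rpow_nonneg hnb r
        linarith
    have hdiv : ((a - b) / 2) ^ r = (a - b) ^ r / 2 ^ r :=
      Real.div_rpow hab2 (by norm_num) r
    have hb' : spow r b = -((-b) ^ r) := by
      have h := spow_neg r (-b)
      rw [neg_neg] at h
      rw [h, spow_of_nonneg hr0 hnb]
    rw [spow_of_nonneg hr0 ha, hb']
    rw [hdiv] at hmax
    linarith

/-- Main pointwise inequality. -/
lemma main_pt {r p : ℝ} (hr : 1 ≤ r) (hp : 1 < p) (a b : ℝ) :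
    (2 : ℝ) ^ (-r) * |a - b| ^ (p - 1 + r)
      ≤ spow (p - 1) (a - b) * (spow r a - spow r b) := by
  have hr0 : 0 < r := lt_of_lt_of_le one_pos hr
  have hp1 : 0 < p - 1 := by linarith
  have hq : 0 < p - 1 + r := by linarith
  have h2r : (2:ℝ) ^ (-r) = 1 / 2 ^ r := by
    rw [Real.rpow_neg (by norm_num) r, one_div]
  -- symmetric reduction: prove for b ≤ a
  have main : ∀ a b : ℝ, b ≤ a →
      (2 : ℝ) ^ (-r) * |a - b| ^ (p - 1 + r)
        ≤ spow (p - 1) (a - b) * (spow r a - spow r b) := by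
    intro a b hab
    set t := a - b with ht
    have htn : 0 ≤ t := sub_nonneg.2 hab
    rcases htn.eq_or_lt with h0 | h0
    · rw [← h0, abs_zero, Real.zero_rpow hq.ne']
      have : spow r a - spow r b = 0 := by
        have : a = b := by linarith [ht ▸ h0.symm]
        simp [this]
      simp [this]
    · have hD : t ^ r / 2 ^ r ≤ spow r a - spow r b := key hr hab
      rw [abs_of_pos h0, spow_of_nonneg hp1 htn,
        show p - 1 + r = (p - 1) + r from rfl, Real.rpow_add h0]
      have htp : (0:ℝ) ≤ t ^ (p - 1) := Real.rpow_nonneg htn _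
      calc (2:ℝ) ^ (-r) * (t ^ (p-1) * t ^ r)
          = t ^ (p-1) * (t ^ r / 2 ^ r) := by rw [h2r]; ring
        _ ≤ t ^ (p-1) * (spow r a - spow r b) :=
            mul_le_mul_of_nonneg_left hD htp
  rcases le_total b a with hab | hab
  · exact main a b hab
  · have h := main b a hab
    have e1 : |b - a| = |a - b| := abs_sub_comm b a
    have e2 : spow (p - 1) (b - a) * (spow r b - spow r a)
        = spow (p - 1) (a - b) * (spow r a - spow r b) := by
      rw [show b - a = -(a - b) by ring, spow_neg]; ring
    rw [e1, e2] at h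
    exact h

/-- coercivity estimate. For `r ≥ 1` there is `c > 0`, depending only
on `r`, such that for all `d ≥ 1`, `p ∈ (1,∞)`, `s ∈ (0,1)` and every measurable
`v : ℝ^d → ℝ`, the integrand `⟦v(x)−v(y)⟧^{p−1}(⟦v(x)⟧^r − ⟦v(y)⟧^r)|x−y|^{−(d+sp)}`
is pointwise nonnegative and one has the inequality of (possibly infinite) integrals
`E(v, ⟦v⟧^r) ≥ c ∫∫ |v(x)−v(y)|^{p−1+r}|x−y|^{−(d+sp)}`. -/
theorem stmt6 (r : ℝ) (hr : 1 ≤ r) :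
    ∃ c : ℝ, 0 < c ∧
      ∀ (d : ℕ), 1 ≤ d → ∀ (p s : ℝ), 1 < p → s ∈ Set.Ioo (0 : ℝ) 1 →
      ∀ v : EuclideanSpace ℝ (Fin d) → ℝ, Measurable v →
        (∀ x y : EuclideanSpace ℝ (Fin d),
          0 ≤ spow (p - 1) (v x - v y) * (spow r (v x) - spow r (v y)) /
            ‖x - y‖ ^ ((d : ℝ) + s * p)) ∧
        (∫⁻ z : EuclideanSpace ℝ (Fin d) × EuclideanSpace ℝ (Fin d),
            ENNReal.ofReal (spow (p - 1) (v z.1 - v z.2) *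
              (spow r (v z.1) - spow r (v z.2)) / ‖z.1 - z.2‖ ^ ((d : ℝ) + s * p)))
          ≥ ENNReal.ofReal c *
            ∫⁻ z : EuclideanSpace ℝ (Fin d) × EuclideanSpace ℝ (Fin d),
              ENNReal.ofReal (|v z.1 - v z.2| ^ (p - 1 + r) /
                ‖z.1 - z.2‖ ^ ((d : ℝ) + s * p)) := by
  refine ⟨(2 : ℝ) ^ (-r), Real.rpow_pos_of_pos (by norm_num) _, ?_⟩
  intro d hd p s hp hs v hv
  set c := (2 : ℝ) ^ (-r) with hc
  have hc0 : 0 ≤ c := (Real.rpow_pos_of_pos (by norm_num) _).le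
  have hpt : ∀ a b : ℝ, c * |a - b| ^ (p - 1 + r)
      ≤ spow (p - 1) (a - b) * (spow r a - spow r b) := fun a b => main_pt hr hp a b
  constructor
  · intro x y
    apply div_nonneg _ (Real.rpow_nonneg (norm_nonneg _) _)
    exact le_trans (mul_nonneg hc0 (Real.rpow_nonneg (abs_nonneg _) _)) (hpt _ _)
  · have hle : ∀ z : EuclideanSpace ℝ (Fin d) × EuclideanSpace ℝ (Fin d),
        ENNReal.ofReal c * ENNReal.ofReal (|v z.1 - v z.2| ^ (p - 1 + r) /
          ‖z.1 - z.2‖ ^ ((d : ℝ) + s * p))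
        ≤ ENNReal.ofReal (spow (p - 1) (v z.1 - v z.2) *
            (spow r (v z.1) - spow r (v z.2)) / ‖z.1 - z.2‖ ^ ((d : ℝ) + s * p)) := by
      intro z
      rw [← ENNReal.ofReal_mul hc0]
      apply ENNReal.ofReal_le_ofReal
      rw [← mul_div_assoc]
      set k := ‖z.1 - z.2‖ ^ ((d : ℝ) + s * p) with hk
      have hk0 : 0 ≤ k := Real.rpow_nonneg (norm_nonneg _) _
      rcases hk0.eq_or_lt with h0 | h0
      · simp [← h0]
      · exact (div_le_div_iff_of_pos_right h0).2 (hpt _ _)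
    calc ENNReal.ofReal c *
          ∫⁻ z : EuclideanSpace ℝ (Fin d) × EuclideanSpace ℝ (Fin d),
            ENNReal.ofReal (|v z.1 - v z.2| ^ (p - 1 + r) /
              ‖z.1 - z.2‖ ^ ((d : ℝ) + s * p))
        = ∫⁻ z : EuclideanSpace ℝ (Fin d) × EuclideanSpace ℝ (Fin d),
            ENNReal.ofReal c * ENNReal.ofReal (|v z.1 - v z.2| ^ (p - 1 + r) /
              ‖z.1 - z.2‖ ^ ((d : ℝ) + s * p)) :=
          (lintegral_const_mul' _ _ ENNReal.ofReal_ne_top).symm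
      _ ≤ ∫⁻ z : EuclideanSpace ℝ (Fin d) × EuclideanSpace ℝ (Fin d),
            ENNReal.ofReal (spow (p - 1) (v z.1 - v z.2) *
              (spow r (v z.1) - spow r (v z.2)) / ‖z.1 - z.2‖ ^ ((d : ℝ) + s * p)) :=
          lintegral_mono hle
end

section
/- (Scheme energy estimate for one implicit time step.) Let d ≥ 1, p ∈ (1,∞), s ∈ (0,1), m > 1, Δt > 0, let Ω ⊂ ℝ^d be open and bounded, and let w ∈ W^{s,p}_0(Ω) ∩ L^∞(Ω), h ∈ L^∞(Ω) and v ∈ W^{s,p}_0(Ω) ∩ L^∞(Ω) satisfy, for every φ ∈ W^{s,p}_0(Ω) ∩ L^∞(Ω): (1/Δt)∫_Ω (β(v) − β(w))φ dx + E(v, φ) = ∫_Ω hφ dx. Then (1/Δt)∫_Ω (β(v) − β(w))(v − w) dx + (1/p)[v]_{s,p}^p ≤ ∫_Ω h(v − w) dx + (1/p)[w]_{s,p}^p. -/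
open MeasureTheory ENNReal

/-- Fractional p-Laplacian pairing
`E(u,φ) = ∫∫ ⟦u(x)−u(y)⟧^{p−1}(φ(x)−φ(y)) |x−y|^{−(d+sp)} dx dy`. -/
noncomputable def fracPairing (d : ℕ) (s p : ℝ)
    (u φ : EuclideanSpace ℝ (Fin d) → ℝ) : ℝ :=
  ∫ z : EuclideanSpace ℝ (Fin d) × EuclideanSpace ℝ (Fin d),
    spow (p - 1) (u z.1 - u z.2) * (φ z.1 - φ z.2) / ‖z.1 - z.2‖ ^ ((d : ℝ) + s * p)

/-- Gagliardo seminorm to the `p`-th power, as an extended nonnegative real. -/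
noncomputable def gagliardo (d : ℕ) (s p : ℝ)
    (u : EuclideanSpace ℝ (Fin d) → ℝ) : ℝ≥0∞ :=
  ∫⁻ z : EuclideanSpace ℝ (Fin d) × EuclideanSpace ℝ (Fin d),
    ENNReal.ofReal (|u z.1 - u z.2| ^ p / ‖z.1 - z.2‖ ^ ((d : ℝ) + s * p))

/-- Membership in `W^{s,p}_0(Ω)`. -/
def memW0 (d : ℕ) (s p : ℝ) (Ω : Set (EuclideanSpace ℝ (Fin d)))
    (u : EuclideanSpace ℝ (Fin d) → ℝ) : Prop :=
  Measurable u ∧ MemLp u (ENNReal.ofReal p) volume ∧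
    gagliardo d s p u < ⊤ ∧ ∀ᵐ x, x ∉ Ω → u x = 0

/-! ### Auxiliary pointwise lemmas -/

lemma measurable_comp_rpow {α : Type*} [MeasurableSpace α] {f : α → ℝ} (hf : Measurable f)
    (hf0 : ∀ x, 0 ≤ f x) (q : ℝ) : Measurable fun x => f x ^ q := by
  have hfun : (fun x => f x ^ q)
      = fun x => if f x = 0 then (0:ℝ) ^ q else Real.exp (Real.log (f x) * q) := by
    funext x
    split_ifs with hx
    · rw [hx]
    · rw [Real.rpow_def_of_pos (lt_of_le_of_ne (hf0 x) (Ne.symm hx))]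
  rw [hfun]
  exact Measurable.ite (hf (measurableSet_singleton 0)) measurable_const
    (Real.measurable_exp.comp ((Real.measurable_log.comp hf).mul_const q))

lemma abs_rpow_sub_one_mul_abs {p : ℝ} (hp : 1 < p) (x : ℝ) :
    |x| ^ (p - 1) * |x| = |x| ^ p := by
  rcases eq_or_ne x 0 with rfl | hx
  · simp [Real.zero_rpow (by linarith : p - 1 ≠ 0), Real.zero_rpow (by linarith : p ≠ 0)]
  · rw [← Real.rpow_add_one (abs_ne_zero.2 hx), sub_add_cancel]

lemma abs_spow {r : ℝ} (hr : 0 < r) (a : ℝ) : |spow r a| = |a| ^ r := by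
  rcases eq_or_ne a 0 with rfl | ha
  · simp [spow, Real.zero_rpow hr.ne']
  · rw [spow, abs_mul, abs_of_nonneg (Real.rpow_nonneg (abs_nonneg a) _),
      ← Real.rpow_add_one (abs_ne_zero.2 ha), sub_add_cancel]

lemma spow_mul_self {p : ℝ} (hp : 1 < p) (a : ℝ) : spow (p - 1) a * a = |a| ^ p := by
  have h : spow (p - 1) a * a = |spow (p - 1) a| * |a| := by
    rw [spow, abs_mul, abs_of_nonneg (Real.rpow_nonneg (abs_nonneg a) _), mul_assoc,
      mul_assoc, abs_mul_abs_self]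
  rw [h, abs_spow (by linarith) a, abs_rpow_sub_one_mul_abs hp]

lemma young_aux {p : ℝ} (hp : 1 < p) (a b : ℝ) :
    |a| ^ (p - 1) * |b| ≤ |a| ^ p * (p - 1) / p + |b| ^ p / p := by
  have hpq : ((p / (p - 1)) : ℝ).HolderConjugate p := (Real.HolderConjugate.conjExponent hp).symm
  have h3 := Real.young_inequality_of_nonneg
    (Real.rpow_nonneg (abs_nonneg a) (p - 1)) (abs_nonneg b) hpq
  have h4 : (|a| ^ (p - 1)) ^ (p / (p - 1)) = |a| ^ p := by
    rw [← Real.rpow_mul (abs_nonneg a)]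
    congr 1
    have hp1 : p - 1 ≠ 0 := by intro hc; linarith [sub_eq_zero.mp hc]
    field_simp
  rw [h4] at h3
  have h5 : |a| ^ p / (p / (p - 1)) = |a| ^ p * (p - 1) / p := by
    rw [div_div_eq_mul_div]
  linarith [h5 ▸ h3]

lemma key_conv {p : ℝ} (hp : 1 < p) (a b : ℝ) :
    |a| ^ p / p - |b| ^ p / p ≤ spow (p - 1) a * (a - b) := by
  have h1 : spow (p - 1) a * (a - b) = |a| ^ p - spow (p - 1) a * b := by
    rw [mul_sub, spow_mul_self hp]
  have h2 : spow (p - 1) a * b ≤ |a| ^ (p - 1) * |b| := by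
    calc spow (p - 1) a * b ≤ |spow (p - 1) a * b| := le_abs_self _
    _ = |a| ^ (p - 1) * |b| := by rw [abs_mul, abs_spow (by linarith)]
  have h3 := young_aux hp a b
  have hA : 0 ≤ |a| ^ p := Real.rpow_nonneg (abs_nonneg a) p
  have hp0 : 0 < p := by linarith
  rw [h1]
  have h6 : |a| ^ p * (p - 1) / p = |a| ^ p - |a| ^ p / p := by field_simp
  linarith [h6 ▸ h3]

/-! ### Integrability of the Gagliardo integrand -/

lemma gag_meas {d : ℕ} (s p : ℝ) {u : EuclideanSpace ℝ (Fin d) → ℝ} (hu : Measurable u) :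
    Measurable (fun z : EuclideanSpace ℝ (Fin d) × EuclideanSpace ℝ (Fin d) =>
      |u z.1 - u z.2| ^ p / ‖z.1 - z.2‖ ^ ((d : ℝ) + s * p)) :=
  (measurable_comp_rpow ((hu.comp measurable_fst).sub (hu.comp measurable_snd)).abs
    (fun _ => abs_nonneg _) p).div
    (measurable_comp_rpow (measurable_fst.sub measurable_snd).norm (fun _ => norm_nonneg _) _)

lemma gag_nonneg {d : ℕ} (s p : ℝ) (u : EuclideanSpace ℝ (Fin d) → ℝ)
    (z : EuclideanSpace ℝ (Fin d) × EuclideanSpace ℝ (Fin d)) :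
    0 ≤ |u z.1 - u z.2| ^ p / ‖z.1 - z.2‖ ^ ((d : ℝ) + s * p) :=
  div_nonneg (Real.rpow_nonneg (abs_nonneg _) _) (Real.rpow_nonneg (norm_nonneg _) _)

lemma gag_integrable {d : ℕ} {s p : ℝ} {u : EuclideanSpace ℝ (Fin d) → ℝ}
    (hu : Measurable u) (hfin : gagliardo d s p u < ⊤) :
    Integrable (fun z : EuclideanSpace ℝ (Fin d) × EuclideanSpace ℝ (Fin d) =>
      |u z.1 - u z.2| ^ p / ‖z.1 - z.2‖ ^ ((d : ℝ) + s * p)) := by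
  refine ⟨(gag_meas s p hu).aestronglyMeasurable, ?_⟩
  rw [hasFiniteIntegral_iff_ofReal (ae_of_all _ (gag_nonneg s p u))]
  exact hfin

lemma gag_integral {d : ℕ} {s p : ℝ} {u : EuclideanSpace ℝ (Fin d) → ℝ}
    (hu : Measurable u) :
    (∫ z : EuclideanSpace ℝ (Fin d) × EuclideanSpace ℝ (Fin d),
      |u z.1 - u z.2| ^ p / ‖z.1 - z.2‖ ^ ((d : ℝ) + s * p)) = (gagliardo d s p u).toReal := by
  rw [integral_eq_lintegral_of_nonneg_ae (ae_of_all _ (gag_nonneg s p u))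
    (gag_meas s p hu).aestronglyMeasurable]
  rfl

/-- `|a - b|^p ≤ 2^p (|a|^p + |b|^p)`. -/
lemma abs_sub_rpow_le {p : ℝ} (hp : 0 < p) (a b : ℝ) :
    |a - b| ^ p ≤ 2 ^ p * (|a| ^ p + |b| ^ p) := by
  have h1 : |a - b| ≤ 2 * max |a| |b| := by
    calc |a - b| ≤ |a| + |b| := abs_sub a b
    _ ≤ 2 * max |a| |b| := by rcases max_cases |a| |b| with ⟨hm, _⟩ | ⟨hm, _⟩ <;>
        rw [hm] <;> nlinarith [abs_nonneg a, abs_nonneg b]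
  have h2 : |a - b| ^ p ≤ (2 * max |a| |b|) ^ p :=
    Real.rpow_le_rpow (abs_nonneg _) h1 hp.le
  have h3 : (2 * max |a| |b|) ^ p = 2 ^ p * (max |a| |b|) ^ p :=
    Real.mul_rpow (by norm_num) (le_max_iff.2 (Or.inl (abs_nonneg a)))
  have h4 : (max |a| |b|) ^ p ≤ |a| ^ p + |b| ^ p := by
    rcases max_cases |a| |b| with ⟨hm, _⟩ | ⟨hm, _⟩ <;> rw [hm]
    · nlinarith [Real.rpow_nonneg (abs_nonneg b) p]
    · nlinarith [Real.rpow_nonneg (abs_nonneg a) p]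
  calc |a - b| ^ p ≤ 2 ^ p * (max |a| |b|) ^ p := h3 ▸ h2
  _ ≤ 2 ^ p * (|a| ^ p + |b| ^ p) := by
      have : (0:ℝ) ≤ 2 ^ p := Real.rpow_nonneg (by norm_num) p
      nlinarith

/-- scheme energy estimate for one implicit time step. If `v` solves
`(1/Δt)β(v) + (−Δ)^s_p v = h + (1/Δt)β(w)` weakly, then
`(1/Δt)∫_Ω (β(v) − β(w))(v − w) + (1/p)[v]^p ≤ ∫_Ω h(v − w) + (1/p)[w]^p`. -/
theorem stmt15 (d : ℕ) (hd : 1 ≤ d) (p s m : ℝ) (hp : 1 < p)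
    (hs : s ∈ Set.Ioo (0 : ℝ) 1) (hm : 1 < m)
    (Δt : ℝ) (hΔt : 0 < Δt)
    (Ω : Set (EuclideanSpace ℝ (Fin d))) (hΩo : IsOpen Ω) (hΩb : Bornology.IsBounded Ω)
    (w h v : EuclideanSpace ℝ (Fin d) → ℝ)
    (hw : memW0 d s p Ω w) (hwB : MemLp w ⊤ (volume.restrict Ω))
    (hh : MemLp h ⊤ (volume.restrict Ω))
    (hv : memW0 d s p Ω v) (hvB : MemLp v ⊤ (volume.restrict Ω))
    (heq : ∀ φ : EuclideanSpace ℝ (Fin d) → ℝ,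
      memW0 d s p Ω φ → MemLp φ ⊤ (volume.restrict Ω) →
      (1 / Δt) * (∫ x in Ω, (spow m⁻¹ (v x) - spow m⁻¹ (w x)) * φ x) +
        fracPairing d s p v φ = ∫ x in Ω, h x * φ x) :
    (1 / Δt) * (∫ x in Ω, (spow m⁻¹ (v x) - spow m⁻¹ (w x)) * (v x - w x)) +
        (1 / p) * (gagliardo d s p v).toReal ≤
      (∫ x in Ω, h x * (v x - w x)) + (1 / p) * (gagliardo d s p w).toReal := by
  obtain ⟨hvm, hvLp, hvG, hv0⟩ := hv
  obtain ⟨hwm, hwLp, hwG, hw0⟩ := hw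
  have hp0 : (0:ℝ) < p := by linarith
  set K : EuclideanSpace ℝ (Fin d) × EuclideanSpace ℝ (Fin d) → ℝ :=
    fun z => ‖z.1 - z.2‖ ^ ((d : ℝ) + s * p) with hK
  have hK0 : ∀ z, 0 ≤ K z := fun z => Real.rpow_nonneg (norm_nonneg _) _
  set V : EuclideanSpace ℝ (Fin d) × EuclideanSpace ℝ (Fin d) → ℝ :=
    fun z => v z.1 - v z.2 with hVdef
  set W : EuclideanSpace ℝ (Fin d) × EuclideanSpace ℝ (Fin d) → ℝ :=
    fun z => w z.1 - w z.2 with hWdef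
  -- φ := v - w belongs to the test class
  have hφmem : memW0 d s p Ω (fun x => v x - w x) := by
    refine ⟨hvm.sub hwm, hvLp.sub hwLp, ?_, ?_⟩
    · -- Gagliardo seminorm of the difference is finite
      have hb : ∀ z : EuclideanSpace ℝ (Fin d) × EuclideanSpace ℝ (Fin d),
          ENNReal.ofReal (|(v z.1 - w z.1) - (v z.2 - w z.2)| ^ p / K z) ≤
            ENNReal.ofReal (2 ^ p) * ENNReal.ofReal (|V z| ^ p / K z) +
            ENNReal.ofReal (2 ^ p) * ENNReal.ofReal (|W z| ^ p / K z) := by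
        intro z
        have h2p : (0:ℝ) ≤ 2 ^ p := Real.rpow_nonneg (by norm_num) p
        have hr : |(v z.1 - w z.1) - (v z.2 - w z.2)| ^ p / K z ≤
            2 ^ p * (|V z| ^ p / K z) + 2 ^ p * (|W z| ^ p / K z) := by
          have habs : (v z.1 - w z.1) - (v z.2 - w z.2) = V z - W z := by
            simp only [hVdef, hWdef]; ring
          rw [habs]
          have h1 := abs_sub_rpow_le hp0 (V z) (W z)
          have : |V z - W z| ^ p / K z ≤ (2 ^ p * (|V z| ^ p + |W z| ^ p)) / K z := by
            rcases (hK0 z).eq_or_lt with hz | hz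
            · simp [← hz]
            · exact div_le_div_of_nonneg_right h1 hz.le
          calc |V z - W z| ^ p / K z ≤ (2 ^ p * (|V z| ^ p + |W z| ^ p)) / K z := this
          _ = 2 ^ p * (|V z| ^ p / K z) + 2 ^ p * (|W z| ^ p / K z) := by
              rw [mul_add, add_div, mul_div_assoc, mul_div_assoc]
        calc ENNReal.ofReal (|(v z.1 - w z.1) - (v z.2 - w z.2)| ^ p / K z)
            ≤ ENNReal.ofReal (2 ^ p * (|V z| ^ p / K z) + 2 ^ p * (|W z| ^ p / K z)) :=
              ENNReal.ofReal_le_ofReal hr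
        _ ≤ ENNReal.ofReal (2 ^ p * (|V z| ^ p / K z)) +
              ENNReal.ofReal (2 ^ p * (|W z| ^ p / K z)) := ENNReal.ofReal_add_le
        _ = ENNReal.ofReal (2 ^ p) * ENNReal.ofReal (|V z| ^ p / K z) +
              ENNReal.ofReal (2 ^ p) * ENNReal.ofReal (|W z| ^ p / K z) := by
            rw [ENNReal.ofReal_mul h2p, ENNReal.ofReal_mul h2p]
      have hle : gagliardo d s p (fun x => v x - w x) ≤
          ENNReal.ofReal (2 ^ p) * gagliardo d s p v +
          ENNReal.ofReal (2 ^ p) * gagliardo d s p w := by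
        calc gagliardo d s p (fun x => v x - w x)
            ≤ ∫⁻ z, (ENNReal.ofReal (2 ^ p) * ENNReal.ofReal (|V z| ^ p / K z) +
              ENNReal.ofReal (2 ^ p) * ENNReal.ofReal (|W z| ^ p / K z)) :=
              lintegral_mono hb
        _ = ENNReal.ofReal (2 ^ p) * gagliardo d s p v +
              ENNReal.ofReal (2 ^ p) * gagliardo d s p w := by
            rw [lintegral_add_left ((gag_meas s p hvm).ennreal_ofReal.const_mul _)]
            rw [lintegral_const_mul _ (gag_meas s p hvm).ennreal_ofReal,
              lintegral_const_mul _ (gag_meas s p hwm).ennreal_ofReal]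
            rfl
      exact lt_of_le_of_lt hle (by
        exact ENNReal.add_lt_top.2 ⟨ENNReal.mul_lt_top ENNReal.ofReal_lt_top hvG,
          ENNReal.mul_lt_top ENNReal.ofReal_lt_top hwG⟩)
    · filter_upwards [hv0, hw0] with x h1 h2 hx
      rw [h1 hx, h2 hx, sub_zero]
  have hφB : MemLp (fun x => v x - w x) ⊤ (volume.restrict Ω) := hvB.sub hwB
  have heqφ := heq (fun x => v x - w x) hφmem hφB
  -- integrability data
  have intV := gag_integrable hvm hvG
  have intW := gag_integrable hwm hwG
  have eqV := gag_integral (s := s) (p := p) hvm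
  have eqW := gag_integral (s := s) (p := p) hwm
  -- the pairing with φ dominates the difference of Gagliardo energies
  have hE : (1 / p) * ((gagliardo d s p v).toReal - (gagliardo d s p w).toReal) ≤
      fracPairing d s p v (fun x => v x - w x) := by
    have hrw : fracPairing d s p v (fun x => v x - w x) =
        ∫ z : EuclideanSpace ℝ (Fin d) × EuclideanSpace ℝ (Fin d),
          spow (p - 1) (V z) * (V z - W z) / K z := by
      unfold fracPairing
      refine integral_congr_ae (Filter.Eventually.of_forall fun z => ?_)
      simp only [hVdef, hWdef, hK]
      ring_nf
    have hmeasf : Measurable (fun z : EuclideanSpace ℝ (Fin d) × EuclideanSpace ℝ (Fin d) =>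
        spow (p - 1) (V z) * (V z - W z) / K z) := by
      have hVm : Measurable V := (hvm.comp measurable_fst).sub (hvm.comp measurable_snd)
      have hWm : Measurable W := (hwm.comp measurable_fst).sub (hwm.comp measurable_snd)
      have hKm : Measurable K :=
        measurable_comp_rpow (measurable_fst.sub measurable_snd).norm (fun _ => norm_nonneg _) _
      have hspow : Measurable (fun z => spow (p - 1) (V z)) := by
        unfold spow
        exact (measurable_comp_rpow hVm.abs (fun _ => abs_nonneg _) (p - 1 - 1)).mul hVm
      exact ((hspow.mul (hVm.sub hWm)).div hKm)
    have hbound : ∀ z : EuclideanSpace ℝ (Fin d) × EuclideanSpace ℝ (Fin d),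
        ‖spow (p - 1) (V z) * (V z - W z) / K z‖ ≤
          2 * (|V z| ^ p / K z) + |W z| ^ p / K z := by
      intro z
      have hnum : |spow (p - 1) (V z) * (V z - W z)| ≤ 2 * |V z| ^ p + |W z| ^ p := by
        have e1 : |spow (p - 1) (V z) * (V z - W z)| = |V z| ^ (p - 1) * |V z - W z| := by
          rw [abs_mul, abs_spow (by linarith)]
        have e2 : |V z - W z| ≤ |V z| + |W z| := abs_sub _ _
        have e3 : |V z| ^ (p - 1) * |V z - W z| ≤ |V z| ^ (p - 1) * (|V z| + |W z|) :=
          mul_le_mul_of_nonneg_left e2 (Real.rpow_nonneg (abs_nonneg _) _)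
        have e4 : |V z| ^ (p - 1) * (|V z| + |W z|)
            = |V z| ^ p + |V z| ^ (p - 1) * |W z| := by
          rw [mul_add, abs_rpow_sub_one_mul_abs hp]
        have e5 := young_aux hp (V z) (W z)
        have hBp : (0:ℝ) ≤ |W z| ^ p := Real.rpow_nonneg (abs_nonneg _) _
        have hAp : (0:ℝ) ≤ |V z| ^ p := Real.rpow_nonneg (abs_nonneg _) _
        have c1 : |V z| ^ p * (p - 1) / p ≤ |V z| ^ p := by
          rw [div_le_iff₀ hp0]
          nlinarith
        have c2 : |W z| ^ p / p ≤ |W z| ^ p := by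
          rw [div_le_iff₀ hp0]
          nlinarith
        linarith [e1 ▸ (e3.trans_eq e4)]
      rw [Real.norm_eq_abs, abs_div, abs_of_nonneg (hK0 z)]
      have : |spow (p - 1) (V z) * (V z - W z)| / K z
          ≤ (2 * |V z| ^ p + |W z| ^ p) / K z := by
        exact div_le_div_of_nonneg_right hnum (hK0 z)
      calc |spow (p - 1) (V z) * (V z - W z)| / K z
          ≤ (2 * |V z| ^ p + |W z| ^ p) / K z := this
      _ = 2 * (|V z| ^ p / K z) + |W z| ^ p / K z := by rw [add_div, mul_div_assoc]
    have hintf : Integrable (fun z : EuclideanSpace ℝ (Fin d) × EuclideanSpace ℝ (Fin d) =>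
        spow (p - 1) (V z) * (V z - W z) / K z) := by
      refine Integrable.mono' ((intV.const_mul 2).add intW) hmeasf.aestronglyMeasurable
        (ae_of_all _ hbound)
    have hlow : Integrable (fun z : EuclideanSpace ℝ (Fin d) × EuclideanSpace ℝ (Fin d) =>
        (|V z| ^ p / K z - |W z| ^ p / K z) / p) := (intV.sub intW).div_const p
    have hptwise : ∀ z : EuclideanSpace ℝ (Fin d) × EuclideanSpace ℝ (Fin d),
        (|V z| ^ p / K z - |W z| ^ p / K z) / p ≤ spow (p - 1) (V z) * (V z - W z) / K z := by
      intro z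
      have hk := key_conv hp (V z) (W z)
      have e : (|V z| ^ p / K z - |W z| ^ p / K z) / p
          = (|V z| ^ p / p - |W z| ^ p / p) / K z := by ring
      rw [e]
      exact div_le_div_of_nonneg_right hk (hK0 z)
    have hmono := integral_mono hlow hintf hptwise
    have hcomp : (∫ z : EuclideanSpace ℝ (Fin d) × EuclideanSpace ℝ (Fin d),
        (|V z| ^ p / K z - |W z| ^ p / K z) / p)
        = (1 / p) * ((gagliardo d s p v).toReal - (gagliardo d s p w).toReal) := by
      rw [integral_div, integral_sub intV intW, eqV, eqW]
      ring
    rw [hrw]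
    calc (1 / p) * ((gagliardo d s p v).toReal - (gagliardo d s p w).toReal)
        = ∫ z, (|V z| ^ p / K z - |W z| ^ p / K z) / p := hcomp.symm
    _ ≤ _ := hmono
  linarith [heqφ, hE]
end
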